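/- Let G be a δ-hyperbolic group with word metric d_S. Fix D ∈ ℕ and R > 0. Then there exist constants Δ ∈ ℕ (depending only on δ and D) and s ∈ ℕ (depending only on δ, D, R) such that for every pair of geodesic rays c, c' : ℕ → G with d_S(c(1), c'(1)) ≤ D, either d_S(c(t), Img(c')) ≤ Δ for all t ∈ ℕ, or there is a minimal t₀ ∈ ℕ with d_S(c(t₀), Img(c')) > Δ, and in that case d_S(c(t₀ + s), Img(c')) > R. -/

import Mathlib

/-- The word metric on a group `G` with respect to a generating set `S`. -/
noncomputable def wordDist {G : Type*} [Group G] (S : Set G) (g h : G) : ℕ :=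
  sInf {n | ∃ l : List G, (∀ x ∈ l, x ∈ S) ∧ l.length = n ∧ g = h * l.prod}

/-- `S` is a finite symmetric generating set of `G`. -/
def IsFinSymmGenSet {G : Type*} [Group G] (S : Set G) : Prop :=
  S.Finite ∧ (∀ s ∈ S, s⁻¹ ∈ S) ∧ Subgroup.closure S = ⊤

/-- A discrete geodesic segment from `g` to `h` with respect to the integer-valued
metric `d`, parametrized on `[0, d g h]`. -/
def IsGeodesicSeg {G : Type*} (d : G → G → ℕ) (c : ℕ → G) (g h : G) : Prop :=
  c 0 = g ∧ c (d g h) = h ∧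
    ∀ i j : ℕ, i ≤ d g h → j ≤ d g h → d (c i) (c j) = Nat.dist i j

/-- A discrete geodesic ray: an isometric embedding `c : ℕ → G`. -/
def IsGeodesicRay {G : Type*} (d : G → G → ℕ) (c : ℕ → G) : Prop :=
  ∀ i j : ℕ, d (c i) (c j) = Nat.dist i j

/-- Two rays are asymptotic if their images are at finite Hausdorff distance. -/
def Asymptotic {G : Type*} (d : G → G → ℕ) (c c' : ℕ → G) : Prop :=
  ∃ K : ℕ, (∀ t : ℕ, ∃ s : ℕ, d (c t) (c' s) ≤ K) ∧ (∀ s : ℕ, ∃ t : ℕ, d (c' s) (c t) ≤ K)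

/-- Rips δ-hyperbolicity of the integer-valued metric `d`: each side of any discrete
geodesic triangle is contained in the δ-neighborhood of the union of the other two sides. -/
def DiscHyperbolic {G : Type*} (d : G → G → ℕ) (δ : ℕ) : Prop :=
  ∀ x y z : G, ∀ cxy cyz czx : ℕ → G,
    IsGeodesicSeg d cxy x y → IsGeodesicSeg d cyz y z → IsGeodesicSeg d czx z x →
    ∀ i ≤ d x y, ∃ p ∈ cyz '' Set.Iic (d y z) ∪ czx '' Set.Iic (d z x), d (cxy i) p ≤ δ

section
variable {G : Type*} [Group G] {S : Set G}

lemma exists_word (hS : IsFinSymmGenSet S) (g h : G) :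
    ∃ l : List G, (∀ x ∈ l, x ∈ S) ∧ g = h * l.prod := by
  obtain ⟨-, hsymm, hgen⟩ := hS
  have hx : h⁻¹ * g ∈ Subgroup.closure S := by rw [hgen]; trivial
  rw [← Subgroup.mem_toSubmonoid, Subgroup.closure_toSubmonoid] at hx
  obtain ⟨l, hl, hprod⟩ := Submonoid.exists_list_of_mem_closure hx
  refine ⟨l, fun x hxl => ?_, ?_⟩
  · rcases hl x hxl with h1 | h1
    · exact h1
    · simpa using hsymm _ h1
  · rw [hprod]; group

lemma wordDist_le {g h : G} {l : List G} (h1 : ∀ x ∈ l, x ∈ S) (h2 : g = h * l.prod) :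
    wordDist S g h ≤ l.length :=
  Nat.sInf_le ⟨l, h1, rfl, h2⟩

lemma wordDist_spec (hS : IsFinSymmGenSet S) (g h : G) :
    ∃ l : List G, (∀ x ∈ l, x ∈ S) ∧ l.length = wordDist S g h ∧ g = h * l.prod := by
  have hne : {n | ∃ l : List G, (∀ x ∈ l, x ∈ S) ∧ l.length = n ∧ g = h * l.prod}.Nonempty := by
    obtain ⟨l, h1, h2⟩ := exists_word hS g h
    exact ⟨l.length, l, h1, rfl, h2⟩
  exact Nat.sInf_mem hne

lemma wordDist_symm_le (hS : IsFinSymmGenSet S) (g h : G) :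
    wordDist S h g ≤ wordDist S g h := by
  obtain ⟨l, h1, h2, h3⟩ := wordDist_spec hS g h
  have : h = g * ((l.map fun x => x⁻¹).reverse).prod := by
    rw [← List.prod_inv_reverse, h3]; group
  calc wordDist S h g ≤ ((l.map fun x => x⁻¹).reverse).length := by
        refine wordDist_le (fun x hx => ?_) this
        simp only [List.mem_reverse, List.mem_map] at hx
        obtain ⟨y, hy, rfl⟩ := hx
        exact hS.2.1 _ (h1 y hy)
    _ = wordDist S g h := by simp [h2]

lemma wordDist_symm (hS : IsFinSymmGenSet S) (g h : G) :
    wordDist S g h = wordDist S h g :=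
  le_antisymm (wordDist_symm_le hS h g) (wordDist_symm_le hS g h)

lemma wordDist_triangle (hS : IsFinSymmGenSet S) (g h k : G) :
    wordDist S g k ≤ wordDist S g h + wordDist S h k := by
  obtain ⟨l₁, h1, h2, h3⟩ := wordDist_spec hS g h
  obtain ⟨l₂, h4, h5, h6⟩ := wordDist_spec hS h k
  have : g = k * (l₂ ++ l₁).prod := by rw [List.prod_append, ← mul_assoc, ← h6, ← h3]
  calc wordDist S g k ≤ (l₂ ++ l₁).length := by
        refine wordDist_le (fun x hx => ?_) this
        rcases List.mem_append.mp hx with hx | hx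
        · exact h4 x hx
        · exact h1 x hx
    _ = wordDist S g h + wordDist S h k := by simp [h2, h5]; omega

lemma exists_geodesicSeg (hS : IsFinSymmGenSet S) (g h : G) :
    ∃ c : ℕ → G, IsGeodesicSeg (wordDist S) c g h := by
  obtain ⟨l, h1, h2, h3⟩ := wordDist_spec hS g h
  set n := wordDist S g h with hn
  refine ⟨fun i => h * (l.take (n - i)).prod, ?_, ?_, ?_⟩
  · simp only [Nat.sub_zero]
    rw [← h2, List.take_length, ← h3]
  · simp [← hn]
  · have key : ∀ i j : ℕ, i ≤ j → j ≤ n →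
        wordDist S (h * (l.take (n - i)).prod) (h * (l.take (n - j)).prod) ≤ j - i := by
      intro i j hij hjn
      have harith : n - i = (n - j) + (j - i) := by omega
      have : l.take (n - i) = l.take (n - j) ++ (l.drop (n - j)).take (j - i) := by
        rw [harith, List.take_add]
      have heq : h * (l.take (n - i)).prod
          = (h * (l.take (n - j)).prod) * ((l.drop (n - j)).take (j - i)).prod := by
        rw [this, List.prod_append, mul_assoc]
      calc wordDist S (h * (l.take (n - i)).prod) (h * (l.take (n - j)).prod)
          ≤ ((l.drop (n - j)).take (j - i)).length := by
            refine wordDist_le (fun x hx => ?_) heq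
            exact h1 x (List.drop_subset _ _ (List.take_subset _ _ hx))
        _ ≤ j - i := by simp
    intro i j hi hj
    rcases le_total i j with hij | hij
    · have hub := key i j hij hj
      have hjn := key j n hj le_rfl
      have hc0 : h * (l.take (n - 0)).prod = g := by
        simp only [Nat.sub_zero]; rw [← h2, List.take_length, ← h3]
      have hcn : h * (l.take (n - n)).prod = h := by simp
      have h0i' : wordDist S g (h * (l.take (n - i)).prod) ≤ i := by
        have h2' := key 0 i (Nat.zero_le _) hi
        rw [hc0] at h2'
        simpa using h2'
      have hlow : n ≤ wordDist S (h * (l.take (n - i)).prod) (h * (l.take (n - j)).prod)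
          + (i + (n - j)) := by
        have t1 := wordDist_triangle hS g (h * (l.take (n - i)).prod) h
        have t2 := wordDist_triangle hS (h * (l.take (n - i)).prod)
          (h * (l.take (n - j)).prod) h
        have t3 : wordDist S (h * (l.take (n - j)).prod) h ≤ n - j := by
          have := key j n hj le_rfl
          rwa [hcn] at this
        have hgh : wordDist S g h = n := hn.symm
        omega
      have : wordDist S (h * (l.take (n - i)).prod) (h * (l.take (n - j)).prod) = j - i := by
        omega
      rw [this, Nat.dist]; omega
    · have hub := key j i hij hi
      have hc0 : h * (l.take (n - 0)).prod = g := by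
        simp only [Nat.sub_zero]; rw [← h2, List.take_length, ← h3]
      have hcn : h * (l.take (n - n)).prod = h := by simp
      have h0j' : wordDist S g (h * (l.take (n - j)).prod) ≤ j := by
        have h2' := key 0 j (Nat.zero_le _) hj
        rw [hc0] at h2'
        simpa using h2'
      have hlow : n ≤ wordDist S (h * (l.take (n - j)).prod) (h * (l.take (n - i)).prod)
          + (j + (n - i)) := by
        have t1 := wordDist_triangle hS g (h * (l.take (n - j)).prod) h
        have t2 := wordDist_triangle hS (h * (l.take (n - j)).prod)
          (h * (l.take (n - i)).prod) h
        have t3 : wordDist S (h * (l.take (n - i)).prod) h ≤ n - i := by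
          have := key i n hi le_rfl
          rwa [hcn] at this
        have hgh : wordDist S g h = n := hn.symm
        omega
      have hflip := wordDist_symm hS (h * (l.take (n - i)).prod) (h * (l.take (n - j)).prod)
      have : wordDist S (h * (l.take (n - i)).prod) (h * (l.take (n - j)).prod) = i - j := by
        omega
      rw [this, Nat.dist]; omega

lemma ray_seg {c : ℕ → G} (hc : IsGeodesicRay (wordDist S) c) (n : ℕ) :
    IsGeodesicSeg (wordDist S) c (c 0) (c n) := by
  have hn : wordDist S (c 0) (c n) = n := by rw [hc]; simp [Nat.dist]
  exact ⟨rfl, by rw [hn], fun i j _ _ => hc i j⟩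

end

/-- two geodesic rays starting `D`-close either stay uniformly `Δ`-close,
or diverge beyond any `R` within a uniformly bounded time `s` after first exceeding `Δ`;
`Δ` depends only on `δ, D` and `s` additionally on `R`. -/
theorem rays_uniform_divergence {G : Type*} [Group G] (S : Set G)
    (hS : IsFinSymmGenSet S) (δ : ℕ) (hhyp : DiscHyperbolic (wordDist S) δ) (D : ℕ) :
    ∃ Δ : ℕ, ∀ R : ℝ, 0 < R → ∃ s : ℕ,
      ∀ c c' : ℕ → G, IsGeodesicRay (wordDist S) c → IsGeodesicRay (wordDist S) c' →
        wordDist S (c 1) (c' 1) ≤ D →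
        (∀ t : ℕ, ∃ u : ℕ, wordDist S (c t) (c' u) ≤ Δ) ∨
        (∃ t₀ : ℕ, (∀ u : ℕ, Δ < wordDist S (c t₀) (c' u)) ∧
          (∀ t < t₀, ∃ u : ℕ, wordDist S (c t) (c' u) ≤ Δ) ∧
          (∀ u : ℕ, R < (wordDist S (c (t₀ + s)) (c' u) : ℝ))) := by
  classical
  refine ⟨2*δ + D + 2, fun R hR => ⟨⌈R⌉₊ + δ + 1, fun c c' hc hc' hD => ?_⟩⟩
  by_cases hall : ∀ t : ℕ, ∃ u : ℕ, wordDist S (c t) (c' u) ≤ 2*δ + D + 2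
  · exact Or.inl hall
  · right
    push_neg at hall
    have hex : ∃ t : ℕ, ∀ u : ℕ, 2*δ + D + 2 < wordDist S (c t) (c' u) := hall
    refine ⟨Nat.find hex, Nat.find_spec hex, fun t' ht' => ?_, fun u => ?_⟩
    · have h := Nat.find_min hex ht'
      push_neg at h
      exact h
    · by_contra hle
      push_neg at hle
      set t₀ := Nat.find hex with ht₀
      have hP : ∀ v : ℕ, 2*δ + D + 2 < wordDist S (c t₀) (c' v) := Nat.find_spec hex
      set s : ℕ := ⌈R⌉₊ + δ + 1 with hs
      set n := t₀ + s with hnn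
      have hBC : wordDist S (c n) (c' u) ≤ ⌈R⌉₊ := by
        have h1 := hle.trans (Nat.le_ceil R)
        exact_mod_cast h1
      obtain ⟨σ, hσ⟩ := exists_geodesicSeg hS (c n) (c' u)
      obtain ⟨τ, hτ⟩ := exists_geodesicSeg hS (c' u) (c 0)
      obtain ⟨ρ, hρ⟩ := exists_geodesicSeg hS (c 0) (c' 0)
      have hAB : wordDist S (c 0) (c n) = n := by rw [hc]; simp [Nat.dist]
      have h1 := hhyp (c 0) (c n) (c' u) c σ τ (ray_seg hc n) hσ hτ t₀ (by rw [hAB]; omega)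
      obtain ⟨p, hp, hdp⟩ := h1
      rcases hp with ⟨j, hj, rfl⟩ | ⟨j, hj, rfl⟩
      · -- p on the segment from c n to c' u : contradiction with length of s
        have e1 : wordDist S (c t₀) (c n) = s := by
          rw [hc, hnn, Nat.dist]; omega
        have e2 : wordDist S (σ j) (c n) ≤ wordDist S (c n) (c' u) := by
          have h3 := hσ.2.2 j 0 hj (Nat.zero_le _)
          rw [hσ.1] at h3
          rw [h3, Nat.dist]
          simp only [Set.mem_Iic] at hj
          omega
        have t1 := wordDist_triangle hS (c t₀) (σ j) (c n)
        omega
      · -- p = τ j on the diagonal; apply hyperbolicity to the second triangle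
        simp only [Set.mem_Iic] at hj
        have h2 := hhyp (c' u) (c 0) (c' 0) τ ρ c' hτ hρ (ray_seg hc' u) j hj
        obtain ⟨r, hr, hdr⟩ := h2
        have hAE : wordDist S (c 0) (c' 0) ≤ D + 2 := by
          have t1 := wordDist_triangle hS (c 0) (c 1) (c' 0)
          have t2 := wordDist_triangle hS (c 1) (c' 1) (c' 0)
          have e01 : wordDist S (c 0) (c 1) = 1 := by rw [hc]; simp [Nat.dist]
          have e10 : wordDist S (c' 1) (c' 0) = 1 := by rw [hc']; simp [Nat.dist]
          omega
        rcases hr with ⟨k, hk, rfl⟩ | ⟨k, hk, rfl⟩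
        · -- r = ρ k on the short segment from c 0 to c' 0
          simp only [Set.mem_Iic] at hk
          have e3 : wordDist S (ρ k) (c' 0) ≤ wordDist S (c 0) (c' 0) := by
            have h4 := hρ.2.2 k (wordDist S (c 0) (c' 0)) hk le_rfl
            rw [hρ.2.1] at h4
            rw [h4, Nat.dist]
            omega
          have t1 := wordDist_triangle hS (c t₀) (τ j) (c' 0)
          have t2 := wordDist_triangle hS (τ j) (ρ k) (c' 0)
          have hP0 := hP 0
          omega
        · -- r = c' k on the ray c'
          have t1 := wordDist_triangle hS (c t₀) (τ j) (c' k)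
          have hPk := hP k
          omega
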